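/- If G is a connected r-regular graph with r ≥ 3 and diam(G) = 2, then dim_ms(G) = n(G) - 1. -/

import Mathlib

open SimpleGraph

noncomputable def mrep {V : Type*} (G : SimpleGraph V) (u : V) (S : Finset V) : Multiset ℕ :=
  S.val.map fun w => G.dist u w

def IsOMR {V : Type*} (G : SimpleGraph V) (S : Finset V) : Prop :=
  ∀ u ∉ S, ∀ v ∉ S, mrep G u S = mrep G v S → u = v

noncomputable def dimMS {V : Type*} (G : SimpleGraph V) [Fintype V] : ℕ :=
  sInf {n | ∃ S : Finset V, S.card = n ∧ IsOMR G S}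

noncomputable def gdiam {V : Type*} (G : SimpleGraph V) [Fintype V] : ℕ :=
  Finset.univ.sup fun p : V × V => G.dist p.1 p.2

theorem stmt_4 (V : Type*) [Fintype V] (G : SimpleGraph V) [DecidableRel G.Adj]
    (hconn : G.Connected) (r : ℕ) (hr : 3 ≤ r) (hreg : G.IsRegularOfDegree r)
    (hdiam : gdiam G = 2) :
    dimMS G = Fintype.card V - 1 := by
  classical
  obtain ⟨x⟩ : Nonempty V := hconn.nonempty
  set n := Fintype.card V with hn
  -- every distance between distinct vertices is 1 or 2
  have hdist : ∀ u w : V, u ≠ w → G.dist u w = 1 ∨ G.dist u w = 2 := by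
    intro u w huw
    have h1 : 0 < G.dist u w := hconn.pos_dist_of_ne huw
    have h2 : G.dist u w ≤ 2 := by
      calc G.dist u w ≤ gdiam G :=
            Finset.le_sup (f := fun p : V × V => G.dist p.1 p.2) (Finset.mem_univ (u, w))
        _ = 2 := hdiam
    omega
  -- count description of mrep
  have hcount : ∀ (S : Finset V) (u : V), u ∉ S → ∀ b : ℕ,
      Multiset.count b (mrep G u S) =
        if b = 1 then (S.filter (fun w => G.Adj u w)).card
        else if b = 2 then S.card - (S.filter (fun w => G.Adj u w)).card
        else 0 := by
    intro S u hu b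
    have hne : ∀ w ∈ S, u ≠ w := fun w hw h => hu (h ▸ hw)
    have hm : Multiset.count b (mrep G u S) = (S.filter (fun w => b = G.dist u w)).card := by
      rw [mrep, Multiset.count_map]; rfl
    rw [hm]
    have hsplit := Finset.card_filter_add_card_filter_not
      (s := S) (p := fun w => G.Adj u w)
    by_cases hb1 : b = 1
    · subst hb1
      rw [if_pos rfl]
      congr 1
      apply Finset.filter_congr
      intro w _
      exact ⟨fun h => SimpleGraph.dist_eq_one_iff_adj.mp h.symm,
             fun h => (SimpleGraph.dist_eq_one_iff_adj.mpr h).symm⟩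
    · by_cases hb2 : b = 2
      · subst hb2
        rw [if_neg hb1, if_pos rfl]
        have heq : S.filter (fun w => 2 = G.dist u w) = S.filter (fun w => ¬ G.Adj u w) := by
          apply Finset.filter_congr
          intro w hw
          have h12 := hdist u w (hne w hw)
          rw [← SimpleGraph.dist_eq_one_iff_adj]
          constructor
          · intro h; omega
          · intro h; omega
        rw [heq]
        omega
      · rw [if_neg hb1, if_neg hb2]
        rw [Finset.card_eq_zero, Finset.filter_eq_empty_iff]
        intro w hw
        have := hdist u w (hne w hw)
        omega
  -- mrep is determined by the number of neighbors in S
  have hmrep : ∀ (S : Finset V) (u v : V), u ∉ S → v ∉ S →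
      (S.filter (fun w => G.Adj u w)).card = (S.filter (fun w => G.Adj v w)).card →
      mrep G u S = mrep G v S := by
    intro S u v hu hv h
    ext b
    rw [hcount S u hu b, hcount S v hv b, h]
  -- degree split
  have hsplit : ∀ (S : Finset V) (u : V),
      (S.filter (fun w => G.Adj u w)).card + (Sᶜ.filter (fun w => G.Adj u w)).card = r := by
    intro S u
    have hu : S.filter (fun w => G.Adj u w) ∪ Sᶜ.filter (fun w => G.Adj u w)
        = Finset.univ.filter (fun w => G.Adj u w) := by
      rw [← Finset.filter_union, Finset.union_compl]
    have hdisj : Disjoint (S.filter (fun w => G.Adj u w)) (Sᶜ.filter (fun w => G.Adj u w)) :=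
      Finset.disjoint_filter_filter disjoint_compl_right
    have hnf : Finset.univ.filter (fun w => G.Adj u w) = G.neighborFinset u := by
      ext w; simp
    rw [← Finset.card_union_of_disjoint hdisj, hu, hnf]
    exact hreg u
  -- lower bound: any OMR set has at least n - 1 elements
  have hlow : ∀ S : Finset V, IsOMR G S → n - 1 ≤ S.card := by
    intro S hS
    by_contra hc
    push_neg at hc
    have hTcard : Sᶜ.card = n - S.card := Finset.card_compl S
    have hSle : S.card ≤ n := Finset.card_le_univ S
    have hT2 : 2 ≤ Sᶜ.card := by omega
    have hmemT : ∀ u ∈ Sᶜ, u ∉ S := fun u hu => Finset.mem_compl.mp hu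
    have hinj : ∀ u ∈ Sᶜ, ∀ v ∈ Sᶜ,
        (Sᶜ.filter (fun w => G.Adj u w)).card = (Sᶜ.filter (fun w => G.Adj v w)).card → u = v := by
      intro u hu v hv hguv
      have h1 := hsplit S u
      have h2 := hsplit S v
      have h3 : (S.filter (fun w => G.Adj u w)).card = (S.filter (fun w => G.Adj v w)).card := by
        omega
      exact hS u (hmemT u hu) v (hmemT v hv) (hmrep S u v (hmemT u hu) (hmemT v hv) h3)
    have hsub : ∀ u ∈ Sᶜ, Sᶜ.filter (fun w => G.Adj u w) ⊆ Sᶜ.erase u := by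
      intro u hu w hw
      rw [Finset.mem_filter] at hw
      exact Finset.mem_erase.mpr ⟨fun h => G.loopless.irrefl u (h ▸ hw.2), hw.1⟩
    have hbound : ∀ u ∈ Sᶜ, (Sᶜ.filter (fun w => G.Adj u w)).card < Sᶜ.card := by
      intro u hu
      have h1 := Finset.card_le_card (hsub u hu)
      have he : (Sᶜ.erase u).card = Sᶜ.card - 1 := Finset.card_erase_of_mem hu
      omega
    have himg : Sᶜ.image (fun u => (Sᶜ.filter (fun w => G.Adj u w)).card)
        = Finset.range Sᶜ.card := by
      apply Finset.eq_of_subset_of_card_le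
      · intro b hb
        rw [Finset.mem_image] at hb
        obtain ⟨u, hu, rfl⟩ := hb
        exact Finset.mem_range.mpr (hbound u hu)
      · rw [Finset.card_range, Finset.card_image_of_injOn (fun u hu v hv => hinj u hu v hv)]
    have h0 : (0 : ℕ) ∈ Sᶜ.image (fun u => (Sᶜ.filter (fun w => G.Adj u w)).card) := by
      rw [himg, Finset.mem_range]; omega
    have hmax : Sᶜ.card - 1 ∈ Sᶜ.image (fun u => (Sᶜ.filter (fun w => G.Adj u w)).card) := by
      rw [himg, Finset.mem_range]; omega
    rw [Finset.mem_image] at h0 hmax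
    obtain ⟨v, hv, hv0⟩ := h0
    obtain ⟨u, hu, humax⟩ := hmax
    have huv : u ≠ v := by intro h; rw [h, hv0] at humax; omega
    have hfull : Sᶜ.filter (fun w => G.Adj u w) = Sᶜ.erase u := by
      apply Finset.eq_of_subset_of_card_le (hsub u hu)
      rw [Finset.card_erase_of_mem hu]
      exact le_of_eq humax.symm
    have hvm : v ∈ Sᶜ.filter (fun w => G.Adj u w) := by
      rw [hfull]
      exact Finset.mem_erase.mpr ⟨fun h => huv h.symm, hv⟩
    have hadj : G.Adj u v := (Finset.mem_filter.mp hvm).2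
    have hum : u ∈ Sᶜ.filter (fun w => G.Adj v w) := Finset.mem_filter.mpr ⟨hu, hadj.symm⟩
    have : 0 < (Sᶜ.filter (fun w => G.Adj v w)).card := Finset.card_pos.mpr ⟨u, hum⟩
    omega
  -- upper bound: univ.erase x is OMR of size n - 1
  have hS0 : IsOMR G (Finset.univ.erase x) := by
    intro u hu v hv _
    have hu' : u = x := by
      by_contra h
      exact hu (Finset.mem_erase.mpr ⟨h, Finset.mem_univ u⟩)
    have hv' : v = x := by
      by_contra h
      exact hv (Finset.mem_erase.mpr ⟨h, Finset.mem_univ v⟩)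
    rw [hu', hv']
  have hmem : n - 1 ∈ {m | ∃ S : Finset V, S.card = m ∧ IsOMR G S} :=
    ⟨Finset.univ.erase x,
      by rw [Finset.card_erase_of_mem (Finset.mem_univ x), Finset.card_univ], hS0⟩
  refine le_antisymm (Nat.sInf_le hmem) (le_csInf ⟨_, hmem⟩ ?_)
  rintro m ⟨S, rfl, hS⟩
  exact hlow S hS
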